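/- Let X be a Banach space, X_d a Banach sequence space whose canonical unit vectors form a Schauder basis, and {x_n} ⊂ X a co-frame (i.e., for every y ∈ X*, the sequence {y(x_n)} lies in X_d* and Ã‖y‖ ≤ ‖{y(x_n)}‖_{X_d*} ≤ B̃‖y‖). Then the synthesis operator S₀ defined on finitely supported sequences by S₀a = Σ_n a_n x_n extends uniquely to a bounded linear operator S : X_d → X, and the adjoint S* : X* → X_d* is the analysis operator Ry = {y(x_n)}. -/
import Mathlib

lemma stmt5_ext {W Y : Type*} [NormedAddCommGroup W] [NormedSpace ℂ W]
    [NormedAddCommGroup Y] [NormedSpace ℂ Y]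
    (ι : W →ₗ[ℂ] (ℕ → ℂ)) (e : ℕ → W)
    (hbasis : ∀ a : W, HasSum (fun n => ι a n • e n) a)
    (T T' : W →L[ℂ] Y) (h : ∀ n, T (e n) = T' (e n)) : T = T' := by
  ext a
  have h1 := (hbasis a).mapL T
  have h2 := (hbasis a).mapL T'
  simp only [map_smul] at h1 h2
  simp only [h] at h1
  exact h1.unique h2

/-- If {x_n} ⊂ X is a co-frame (with analysis operator
Ry = {y(x_n)} ∈ X_d* satisfying Ã‖y‖ ≤ ‖Ry‖ ≤ B̃‖y‖), then the synthesis operator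
defined on finitely supported sequences by S₀a = Σ a_n x_n extends uniquely to a
bounded operator S : X_d → X, and S* = R. The sequence space X_d is modelled as a
Banach space W whose canonical vectors e n form a Schauder basis; a functional
b ∈ X_d* is identified with the sequence (b (e n))_n. -/
theorem stmt5 {X W : Type*} [NormedAddCommGroup X] [NormedSpace ℂ X] [CompleteSpace X]
    [NormedAddCommGroup W] [NormedSpace ℂ W] [CompleteSpace W]
    (ι : W →ₗ[ℂ] (ℕ → ℂ)) (hι : Function.Injective ι)
    (e : ℕ → W) (he : ∀ n, ι (e n) = fun j => if n = j then (1 : ℂ) else 0)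
    (hbasis : ∀ a : W, HasSum (fun n => ι a n • e n) a)
    (x : ℕ → X)
    (Rc : (X →L[ℂ] ℂ) → (W →L[ℂ] ℂ))
    (hRc : ∀ (y : X →L[ℂ] ℂ) (n : ℕ), Rc y (e n) = y (x n))
    (At Bt : ℝ) (hAt : 0 < At) (hBt : 0 < Bt)
    (hcoframe : ∀ y : X →L[ℂ] ℂ, At * ‖y‖ ≤ ‖Rc y‖ ∧ ‖Rc y‖ ≤ Bt * ‖y‖) :
    ∃ S : W →L[ℂ] X, (∀ n, S (e n) = x n) ∧
      (∀ S' : W →L[ℂ] X, (∀ n, S' (e n) = x n) → S' = S) ∧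
      (∀ y : X →L[ℂ] ℂ, y.comp S = Rc y) := by
  -- key finite-sum norm estimate
  have key : ∀ (c : ℕ → ℂ) (s : Finset ℕ),
      ‖∑ n ∈ s, c n • x n‖ ≤ Bt * ‖∑ n ∈ s, c n • e n‖ := by
    intro c s
    apply NormedSpace.norm_le_dual_bound ℂ _ (by positivity)
    intro f
    have h1 : f (∑ n ∈ s, c n • x n) = Rc f (∑ n ∈ s, c n • e n) := by
      simp only [map_sum, map_smul, hRc, smul_eq_mul]
    rw [h1]
    calc ‖Rc f (∑ n ∈ s, c n • e n)‖ ≤ ‖Rc f‖ * ‖∑ n ∈ s, c n • e n‖ :=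
          (Rc f).le_opNorm _
      _ ≤ (Bt * ‖f‖) * ‖∑ n ∈ s, c n • e n‖ :=
          mul_le_mul_of_nonneg_right (hcoframe f).2 (norm_nonneg _)
      _ = Bt * ‖∑ n ∈ s, c n • e n‖ * ‖f‖ := by ring
  -- summability
  have hsum : ∀ a : W, Summable (fun n => ι a n • x n) := by
    intro a
    rw [summable_iff_vanishing]
    intro U hU
    rcases Metric.mem_nhds_iff.mp hU with ⟨ε, hε, hball⟩
    have hW := summable_iff_vanishing.mp (hbasis a).summable
        (Metric.ball 0 (ε / Bt)) (Metric.ball_mem_nhds 0 (by positivity))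
    rcases hW with ⟨s, hs⟩
    refine ⟨s, fun t ht => ?_⟩
    apply hball
    rw [mem_ball_zero_iff]
    calc ‖∑ n ∈ t, ι a n • x n‖ ≤ Bt * ‖∑ n ∈ t, ι a n • e n‖ := key _ _
      _ < Bt * (ε / Bt) := by
          apply mul_lt_mul_of_pos_left _ hBt
          exact mem_ball_zero_iff.mp (hs t ht)
      _ = ε := by field_simp
  -- linear map
  let S₀ : W →ₗ[ℂ] X :=
    { toFun := fun a => ∑' n, ι a n • x n
      map_add' := by
        intro a b
        have h : (fun n => ι (a + b) n • x n)
            = fun n => ι a n • x n + ι b n • x n := by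
          funext n; rw [map_add]; simp [add_smul]
        simp only [h]
        exact Summable.tsum_add (hsum a) (hsum b)
      map_smul' := by
        intro c a
        have h : (fun n => ι (c • a) n • x n)
            = fun n => c • (ι a n • x n) := by
          funext n; rw [map_smul]; simp [smul_smul]
        simp only [h, RingHom.id_apply]
        exact Summable.tsum_const_smul c (hsum a) }
  have hbound : ∀ a : W, ‖S₀ a‖ ≤ Bt * ‖a‖ := by
    intro a
    have h1 : HasSum (fun n => ι a n • x n) (S₀ a) := (hsum a).hasSum
    have h2 := (hbasis a).norm.const_mul Bt
    exact le_of_tendsto_of_tendsto' h1.norm h2 (fun s => key _ s)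
  refine ⟨S₀.mkContinuous Bt hbound, ?_, ?_, ?_⟩
  · intro n
    show (∑' m, ι (e n) m • x m) = x n
    have h : (fun m => ι (e n) m • x m) = fun m => if m = n then x n else 0 := by
      funext m
      rw [he]
      by_cases h : n = m
      · subst h; simp
      · simp [h, Ne.symm h]
    rw [h, tsum_ite_eq]
  · intro S' hS'
    apply stmt5_ext ι e hbasis
    intro n
    rw [hS' n]
    show x n = (∑' m, ι (e n) m • x m)
    have h : (fun m => ι (e n) m • x m) = fun m => if m = n then x n else 0 := by
      funext m
      rw [he]
      by_cases h : n = m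
      · subst h; simp
      · simp [h, Ne.symm h]
    rw [h, tsum_ite_eq]
  · intro y
    apply stmt5_ext ι e hbasis
    intro n
    rw [hRc]
    show y (∑' m, ι (e n) m • x m) = y (x n)
    congr 1
    have h : (fun m => ι (e n) m • x m) = fun m => if m = n then x n else 0 := by
      funext m
      rw [he]
      by_cases h : n = m
      · subst h; simp
      · simp [h, Ne.symm h]
    rw [h, tsum_ite_eq]
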